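/- Consider the reframed closed-loop bittide dynamics θ'(t) = A·θ(t) + ω^u + q* + r with A = k·D·B^T an irreducible rate matrix (k > 0), positive left null vector z (z > 0 entrywise, z^T A = 0, 1^T z = 1), spectral projector W = 1·z^T, and q* = (W − I)·ω^u + W·r. Suppose the offset is feasible with r = 0, i.e., β^off = B^T·θ⁰ + λ for some θ⁰ ∈ ℝ^n, and suppose the buffer occupancy β(t) = B^T·θ(t) + λ converges to a limit β^ss as t → ∞. Then β^ss = β^off; that is, the buffer occupancy converges to the buffer offset. -/

import Mathlib

open Matrix Filter

/-- A matrix is Metzler if all its off-diagonal entries are nonnegative. -/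
def IsMetzler {n : ℕ} (Q : Matrix (Fin n) (Fin n) ℝ) : Prop :=
  ∀ i j, i ≠ j → 0 ≤ Q i j

/-- A rate matrix is a Metzler matrix whose rows each sum to zero. -/
def IsRateMatrix {n : ℕ} (Q : Matrix (Fin n) (Fin n) ℝ) : Prop :=
  IsMetzler Q ∧ Q *ᵥ (fun _ => (1 : ℝ)) = 0

/-- A matrix is irreducible if the directed graph with an edge `i → j` whenever
`i ≠ j` and `Q i j ≠ 0` is strongly connected. -/
def IsIrreducibleMatrix {n : ℕ} (Q : Matrix (Fin n) (Fin n) ℝ) : Prop :=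
  ∀ i j : Fin n, i ≠ j → Relation.TransGen (fun a b => a ≠ b ∧ Q a b ≠ 0) i j


/-- If a differentiable function converges at infinity and its derivative converges,
the derivative limit is zero. -/
lemma deriv_limit_zero (f g : ℝ → ℝ) (hf : ∀ t : ℝ, 0 ≤ t → HasDerivAt f (g t) t)
    (a L : ℝ) (ha : Tendsto f atTop (nhds a)) (hL : Tendsto g atTop (nhds L)) : L = 0 := by
  have key : ∀ t : ℝ, 0 ≤ t → ∃ c, t < c ∧ c < t + 1 ∧ g c = f (t + 1) - f t := by
    intro t ht
    have h1 : t < t + 1 := by linarith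
    have hcont : ContinuousOn f (Set.Icc t (t + 1)) := fun x hx =>
      ((hf x (le_trans ht hx.1)).continuousAt).continuousWithinAt
    have hderiv : ∀ x ∈ Set.Ioo t (t + 1), HasDerivAt f (g x) x := fun x hx =>
      hf x (le_trans ht (le_of_lt hx.1))
    obtain ⟨c, hc, hgc⟩ := exists_hasDerivAt_eq_slope f g h1 hcont hderiv
    refine ⟨c, hc.1, hc.2, ?_⟩
    rw [hgc]; field_simp; ring
  choose! ξ h1 h2 h3 using key
  have hξtop : Tendsto ξ atTop atTop := by
    refine tendsto_atTop_mono' atTop ?_ tendsto_id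
    filter_upwards [eventually_ge_atTop (0 : ℝ)] with t ht
    exact le_of_lt (h1 t ht)
  have hgl : Tendsto (fun t => g (ξ t)) atTop (nhds L) := hL.comp hξtop
  have hfl : Tendsto (fun t => f (t + 1) - f t) atTop (nhds 0) := by
    have := (ha.comp (tendsto_atTop_add_const_right atTop (1 : ℝ) tendsto_id)).sub ha
    simpa using this
  have heq : (fun t => g (ξ t)) =ᶠ[atTop] fun t => f (t + 1) - f t := by
    filter_upwards [eventually_ge_atTop (0 : ℝ)] with t ht
    exact h3 t ht
  exact tendsto_nhds_unique (hgl.congr' heq) hfl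

/-- The kernel of an irreducible rate matrix consists of constant vectors. -/
lemma rate_kernel_const {n : ℕ} (A : Matrix (Fin n) (Fin n) ℝ)
    (hrate : IsRateMatrix A) (hirr : IsIrreducibleMatrix A)
    (u : Fin n → ℝ) (hu : A *ᵥ u = 0) : ∃ c, u = fun _ => c := by
  rcases Nat.eq_zero_or_pos n with h0 | hpos
  · subst h0; exact ⟨0, funext fun i => i.elim0⟩
  have : Nonempty (Fin n) := ⟨⟨0, hpos⟩⟩
  obtain ⟨i0, hi0⟩ := Finite.exists_max u
  set M := u i0 with hM
  have prop : ∀ i, u i = M → ∀ j, A i j ≠ 0 → u j = M := by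
    intro i hi j hAij
    by_cases hij : j = i
    · rw [hij, hi]
    have hsum0 : ∑ jj, A i jj = 0 := by
      have := congrFun hrate.2 i
      simpa [Matrix.mulVec, dotProduct] using this
    have hsumu : ∑ jj, A i jj * u jj = 0 := by
      have := congrFun hu i
      simpa [Matrix.mulVec, dotProduct] using this
    have hsum : ∑ jj, A i jj * (u jj - M) = 0 := by
      have : ∑ jj, A i jj * (u jj - M) = (∑ jj, A i jj * u jj) - (∑ jj, A i jj) * M := by
        rw [Finset.sum_mul, ← Finset.sum_sub_distrib]
        congr 1; funext jj; ring
      rw [this, hsumu, hsum0]; ring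
    have hnonpos : ∀ jj ∈ Finset.univ, A i jj * (u jj - M) ≤ 0 := by
      intro jj _
      by_cases h : jj = i
      · simp [h, hi]
      · exact mul_nonpos_of_nonneg_of_nonpos (hrate.1 i jj fun he => h he.symm)
          (by linarith [hi0 jj])
    have hz := (Finset.sum_eq_zero_iff_of_nonpos hnonpos).1 hsum j (Finset.mem_univ j)
    rcases mul_eq_zero.1 hz with h | h
    · exact absurd h hAij
    · linarith
  have hM' : ∀ j, Relation.TransGen (fun a b => a ≠ b ∧ A a b ≠ 0) i0 j → u j = M := by
    intro j h
    induction h with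
    | single hr => exact prop i0 rfl _ hr.2
    | tail _ hr ih => exact prop _ ih _ hr.2
  refine ⟨M, funext fun j => ?_⟩
  by_cases h : j = i0
  · rw [h]
  · exact hM' j (hirr i0 j fun he => h he.symm)

/-- Reframed closed-loop bittide dynamics `θ'(t) = A θ(t) + ωᵘ + q* + r` with
`A = k·D·Bᵀ` an irreducible rate matrix (`k > 0`), positive left null vector
`z`, spectral projector `W = 1·zᵀ`, and `q* = (W - I)·ωᵘ + W·r` where
`r = k·D·(λ - βᵒᶠᶠ)`.  If the offset is feasible with `r = 0`
(`βᵒᶠᶠ = Bᵀ·θ⁰ + λ` for some `θ⁰`) and the buffer occupancy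
`β(t) = Bᵀ·θ(t) + λ` converges to `βˢˢ`, then `βˢˢ = βᵒᶠᶠ`. -/
theorem buffer_occupancy_tendsto_offset {n m : ℕ} (k : ℝ) (hk : 0 < k)
    (src dst : Fin m → Fin n) (hnoloop : ∀ e, src e ≠ dst e)
    (S D B : Matrix (Fin n) (Fin m) ℝ)
    (hS : ∀ i e, S i e = if src e = i then 1 else 0)
    (hD : ∀ i e, D i e = if dst e = i then 1 else 0)
    (hB : B = S - D)
    (A : Matrix (Fin n) (Fin n) ℝ) (hA : A = k • (D * Bᵀ))
    (hrate : IsRateMatrix A) (hirr : IsIrreducibleMatrix A)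
    (z : Fin n → ℝ) (hz_pos : ∀ i, 0 < z i)
    (hz_left : z ᵥ* A = 0) (hz_sum : ∑ i, z i = 1)
    (W : Matrix (Fin n) (Fin n) ℝ) (hW : W = vecMulVec (fun _ => (1 : ℝ)) z)
    (lam βoff : Fin m → ℝ) (ωu : Fin n → ℝ)
    (r : Fin n → ℝ) (hr : r = k • (D *ᵥ (lam - βoff)))
    (θ0 : Fin n → ℝ) (hfeas : βoff = Bᵀ *ᵥ θ0 + lam)
    (hr0 : r = 0)
    (qs : Fin n → ℝ) (hqs : qs = (W - 1) *ᵥ ωu + W *ᵥ r)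
    (θ : ℝ → Fin n → ℝ)
    (hθ : ∀ t : ℝ, 0 ≤ t → HasDerivAt θ (A *ᵥ θ t + ωu + qs + r) t)
    (βss : Fin m → ℝ)
    (hconv : Tendsto (fun t : ℝ => Bᵀ *ᵥ θ t + lam) atTop (nhds βss)) :
    βss = βoff := by
  have hkne : (k : ℝ) ≠ 0 := ne_of_gt hk
  -- columns of B sum to zero
  have hBone : Bᵀ *ᵥ (fun _ => (1 : ℝ)) = 0 := by
    funext e
    simp [Matrix.mulVec, dotProduct, Matrix.transpose_apply, hB, Matrix.sub_apply,
      hS, hD, Finset.sum_sub_distrib]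
  have hlb : lam - βoff = -(Bᵀ *ᵥ θ0) := by
    funext e; simp [hfeas]
  have hkD : k • (D *ᵥ (lam - βoff)) = 0 := by rw [← hr, hr0]
  have hDθ0 : D *ᵥ (Bᵀ *ᵥ θ0) = 0 := by
    rw [hlb, Matrix.mulVec_neg] at hkD
    rcases smul_eq_zero.mp hkD with h | h
    · exact absurd h hkne
    · simpa using neg_eq_zero.mp h
  -- the constant forcing term
  have hconst : ωu + qs + r = fun _ => ∑ j, z j * ωu j := by
    funext i
    simp [hqs, hr0, hW, Matrix.mulVec, dotProduct, Matrix.sub_apply,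
      Matrix.vecMulVec_apply, Matrix.one_apply, sub_mul, Finset.sum_sub_distrib,
      Finset.sum_ite_eq]
  set Mm : Matrix (Fin m) (Fin m) ℝ := k • (Bᵀ * D) with hMm
  -- key vector identity for the derivative
  have hid : ∀ t : ℝ, Bᵀ *ᵥ (A *ᵥ θ t + ωu + qs + r) = Mm *ᵥ (Bᵀ *ᵥ θ t + lam - βoff) := by
    intro t
    have h1 : A *ᵥ θ t + ωu + qs + r = A *ᵥ θ t + (ωu + qs + r) := by
      funext i; simp [add_assoc]
    rw [h1, hconst, Matrix.mulVec_add]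
    have h2 : Bᵀ *ᵥ (fun _ : Fin n => ∑ j, z j * ωu j) = 0 := by
      have he : (fun _ : Fin n => ∑ j, z j * ωu j) = (∑ j, z j * ωu j) • (fun _ => (1 : ℝ)) := by
        funext i; simp
      rw [he, Matrix.mulVec_smul, hBone, smul_zero]
    rw [h2, add_zero]
    have hDy : D *ᵥ (Bᵀ *ᵥ θ t + lam - βoff) = D *ᵥ (Bᵀ *ᵥ θ t) := by
      have he : Bᵀ *ᵥ θ t + lam - βoff = Bᵀ *ᵥ θ t + (lam - βoff) := by
        funext e; simp; ring
      rw [he, Matrix.mulVec_add, hlb, Matrix.mulVec_neg, hDθ0]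
      simp
    rw [hMm, Matrix.smul_mulVec, ← Matrix.mulVec_mulVec, hDy, hA,
      Matrix.smul_mulVec, ← Matrix.mulVec_mulVec, Matrix.mulVec_smul]
  -- componentwise derivative of the buffer occupancy
  have hd : ∀ (e : Fin m) (t : ℝ), 0 ≤ t → HasDerivAt (fun s => (Bᵀ *ᵥ θ s + lam) e)
      ((Mm *ᵥ (Bᵀ *ᵥ θ t + lam - βoff)) e) t := by
    intro e t ht
    have h2 : ∀ i, HasDerivAt (fun s => θ s i) ((A *ᵥ θ t + ωu + qs + r) i) t :=
      hasDerivAt_pi.mp (hθ t ht)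
    have h3 : HasDerivAt (fun s => (∑ i, Bᵀ e i * θ s i) + lam e)
        (∑ i, Bᵀ e i * (A *ᵥ θ t + ωu + qs + r) i) t :=
      (HasDerivAt.fun_sum fun i _ => (h2 i).const_mul _).add_const (lam e)
    have h4 : (Mm *ᵥ (Bᵀ *ᵥ θ t + lam - βoff)) e
        = ∑ i, Bᵀ e i * (A *ᵥ θ t + ωu + qs + r) i := by
      have := congrFun (hid t) e
      simpa [Matrix.mulVec, dotProduct] using this.symm
    rw [h4]
    convert h3 using 2
    simp [Matrix.mulVec, dotProduct]
  -- the limit of the derivative must be zero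
  have hψ : Mm *ᵥ (βss - βoff) = 0 := by
    funext e
    have hf : Tendsto (fun t => (Bᵀ *ᵥ θ t + lam) e) atTop (nhds (βss e)) :=
      tendsto_pi_nhds.mp hconv e
    have hg : Tendsto (fun t => (Mm *ᵥ (Bᵀ *ᵥ θ t + lam - βoff)) e) atTop
        (nhds ((Mm *ᵥ (βss - βoff)) e)) := by
      have hsum : Tendsto (fun t => ∑ j, Mm e j * ((Bᵀ *ᵥ θ t + lam) j - βoff j)) atTop
          (nhds (∑ j, Mm e j * (βss j - βoff j))) :=
        tendsto_finset_sum _ fun j _ =>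
          (((tendsto_pi_nhds.mp hconv j).sub tendsto_const_nhds).const_mul _)
      convert hsum using 2 with t <;> simp [Matrix.mulVec, dotProduct]
    exact deriv_limit_zero _ _ (hd e) _ _ hf hg
  -- βss - βoff lies in the range of Bᵀ
  have hrange : βss - βoff ∈ LinearMap.range (Matrix.mulVecLin Bᵀ) := by
    have hcl : IsClosed ((LinearMap.range (Matrix.mulVecLin Bᵀ) : Submodule ℝ (Fin m → ℝ)) :
        Set (Fin m → ℝ)) :=
      Submodule.closed_of_finiteDimensional _
    refine hcl.mem_of_tendsto (hconv.sub (tendsto_const_nhds (x := βoff))) ?_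
    filter_upwards with t
    refine ⟨θ t - θ0, ?_⟩
    rw [Matrix.mulVecLin_apply, Matrix.mulVec_sub]
    funext e
    simp [hfeas]
  obtain ⟨v, hv⟩ := hrange
  rw [Matrix.mulVecLin_apply] at hv
  -- A kills D (βss - βoff)
  have hBDl : Bᵀ *ᵥ (D *ᵥ (βss - βoff)) = 0 := by
    rw [hMm, Matrix.smul_mulVec, ← Matrix.mulVec_mulVec] at hψ
    rcases smul_eq_zero.mp hψ with h | h
    · exact absurd h hkne
    · exact h
  have hADl : A *ᵥ (D *ᵥ (βss - βoff)) = 0 := by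
    rw [hA, Matrix.smul_mulVec, ← Matrix.mulVec_mulVec, hBDl, Matrix.mulVec_zero,
      smul_zero]
  obtain ⟨c, hc⟩ := rate_kernel_const A hrate hirr _ hADl
  -- the constant must be zero
  have hAv : A *ᵥ v = fun _ => k * c := by
    rw [hA, Matrix.smul_mulVec, ← Matrix.mulVec_mulVec, hv, hc]
    funext i; simp
  have hzAv : z ⬝ᵥ (A *ᵥ v) = 0 := by
    rw [Matrix.dotProduct_mulVec, hz_left, zero_dotProduct]
  have hc0 : c = 0 := by
    rw [hAv] at hzAv
    have : z ⬝ᵥ (fun _ : Fin n => k * c) = k * c := by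
      simp only [dotProduct]
      rw [← Finset.sum_mul, hz_sum, one_mul]
    rw [this] at hzAv
    exact (mul_eq_zero.mp hzAv).resolve_left hkne
  have hAv0 : A *ᵥ v = 0 := by
    rw [hAv]; funext i; simp [hc0]
  obtain ⟨d, hd'⟩ := rate_kernel_const A hrate hirr v hAv0
  have hl0 : βss - βoff = 0 := by
    rw [← hv, hd']
    have he : (fun _ : Fin n => d) = d • (fun _ => (1 : ℝ)) := by funext i; simp
    rw [he, Matrix.mulVec_smul, hBone, smul_zero]
  exact sub_eq_zero.mp hl0
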